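/- There are exactly 57 maximal non-chromatic scales. -/

import Mathlib

/-- A scale is a finite subset of the twelve pitch classes `ZMod 12`.
It is non-chromatic if it contains no three consecutive pitch classes. -/
def NonChromatic (S : Finset (ZMod 12)) : Prop :=
  ∀ t : ZMod 12, ¬(t ∈ S ∧ t + 1 ∈ S ∧ t + 2 ∈ S)

instance : DecidablePred NonChromatic := fun S => by
  unfold NonChromatic; infer_instance

/-- A non-chromatic scale is maximal if every scale strictly containing it
fails to be non-chromatic. -/
def MaximalNC (S : Finset (ZMod 12)) : Prop :=
  NonChromatic S ∧ ∀ T : Finset (ZMod 12), S ⊂ T → ¬ NonChromatic T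

instance : DecidablePred MaximalNC := fun S => by
  unfold MaximalNC; infer_instance

/-- The translateScale `t + S` of a scale. -/
def translateScale (t : ZMod 12) (S : Finset (ZMod 12)) : Finset (ZMod 12) :=
  S.image (fun x => t + x)

lemma nc_mono {S T : Finset (ZMod 12)} (h : S ⊆ T) (hT : NonChromatic T) :
    NonChromatic S := fun t ht => hT t ⟨h ht.1, h ht.2.1, h ht.2.2⟩

lemma maximalNC_iff (S : Finset (ZMod 12)) :
    MaximalNC S ↔ NonChromatic S ∧ ∀ x ∉ S, ¬ NonChromatic (insert x S) := by
  constructor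
  · rintro ⟨h1, h2⟩
    exact ⟨h1, fun x hx => h2 _ (Finset.ssubset_insert hx)⟩
  · rintro ⟨h1, h2⟩
    refine ⟨h1, fun T hT hTn => ?_⟩
    obtain ⟨x, hxT, hxS⟩ := Finset.exists_of_ssubset hT
    exact h2 x hxS (nc_mono (Finset.insert_subset hxT hT.1) hTn)

/-- The scale encoded by the bits of `n`. -/
def toScale (n : ℕ) : Finset (ZMod 12) :=
  Finset.univ.filter fun i : ZMod 12 => n.testBit i.val

lemma mem_toScale {n : ℕ} {t : ZMod 12} : t ∈ toScale n ↔ n.testBit t.val := by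
  simp [toScale]

/-- Bit-level non-chromaticity. -/
def ncBit (n : ℕ) : Prop :=
  ∀ k : Fin 12, ¬(n.testBit k ∧ n.testBit ((k + 1) % 12) ∧ n.testBit ((k + 2) % 12))

instance : DecidablePred ncBit := fun n => by unfold ncBit; infer_instance

lemma val_add_one (t : ZMod 12) : (t + 1).val = (t.val + 1) % 12 := by
  rw [ZMod.val_add]; rfl

lemma val_add_two (t : ZMod 12) : (t + 2).val = (t.val + 2) % 12 := by
  rw [ZMod.val_add]; rfl

lemma nc_toScale (n : ℕ) : NonChromatic (toScale n) ↔ ncBit n := by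
  constructor
  · intro h k hk
    refine h ((k : ℕ) : ZMod 12) ?_
    have hv : (((k : ℕ) : ZMod 12)).val = (k : ℕ) := by
      simpa using ZMod.val_natCast_of_lt k.isLt
    simp only [mem_toScale, hv, val_add_one, val_add_two]
    exact hk
  · intro h t ht
    refine h ⟨t.val, t.val_lt⟩ ?_
    simp only [mem_toScale, val_add_one, val_add_two] at ht
    exact ht

lemma insert_toScale (n : ℕ) (x : ZMod 12) :
    insert x (toScale n) = toScale (n ||| 2 ^ x.val) := by
  ext t
  have : (n ||| 2 ^ x.val).testBit t.val = (n.testBit t.val || decide (x.val = t.val)) := by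
    simp [Nat.testBit_or, Nat.testBit_two_pow]
  simp only [Finset.mem_insert, mem_toScale, this, Bool.or_eq_true, decide_eq_true_eq]
  constructor
  · rintro (rfl | h)
    · simp
    · simp [h]
  · rintro (h | h)
    · exact Or.inr h
    · exact Or.inl (ZMod.val_injective 12 h.symm)

/-- Bit-level maximality. -/
def maxBit (n : ℕ) : Prop :=
  ncBit n ∧ ∀ k : Fin 12, ¬ n.testBit k → ¬ ncBit (n ||| 2 ^ (k : ℕ))

instance : DecidablePred maxBit := fun n => by unfold maxBit; infer_instance

lemma maximal_toScale (n : ℕ) : MaximalNC (toScale n) ↔ maxBit n := by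
  rw [maximalNC_iff]
  unfold maxBit
  rw [nc_toScale]
  apply and_congr_right'
  constructor
  · intro h k hk
    have hv : (((k : ℕ) : ZMod 12)).val = (k : ℕ) := by
      simpa using ZMod.val_natCast_of_lt k.isLt
    have := h ((k : ℕ) : ZMod 12) (by simpa [mem_toScale, hv] using hk)
    rw [insert_toScale, nc_toScale] at this
    exact hv ▸ this
  · intro h x hx
    rw [insert_toScale, nc_toScale]
    exact h ⟨x.val, x.val_lt⟩ (by simpa [mem_toScale] using hx)

def toScale' (n : Fin 4096) : Finset (ZMod 12) := toScale n

lemma toScale'_bij : Function.Bijective toScale' := by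
  rw [Fintype.bijective_iff_injective_and_card]
  refine ⟨?_, by rw [Fintype.card_fin, Fintype.card_finset, ZMod.card]; norm_num⟩
  intro m n h
  have : ∀ k, (m : ℕ).testBit k = (n : ℕ).testBit k := by
    intro k
    by_cases hk : k < 12
    · have hv : ((k : ZMod 12)).val = k := by
        simpa using ZMod.val_natCast_of_lt hk
      have := congrArg (fun S => (k : ZMod 12) ∈ S) h
      simp only [toScale', mem_toScale, hv, eq_iff_iff] at this
      exact Bool.coe_iff_coe.mp this
    · push_neg at hk
      have h2 : (2:ℕ) ^ 12 ≤ 2 ^ k := Nat.pow_le_pow_right (by norm_num) hk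
      have hm : (m : ℕ) < 2 ^ 12 := m.isLt
      have hn : (n : ℕ) < 2 ^ 12 := n.isLt
      rw [Nat.testBit_eq_false_of_lt (lt_of_lt_of_le hm h2),
        Nat.testBit_eq_false_of_lt (lt_of_lt_of_le hn h2)]
  exact Fin.ext (Nat.eq_of_testBit_eq this)

/-- Fast boolean non-chromaticity test via bit arithmetic. -/
def ncB (n : ℕ) : Bool :=
  (((n ||| (n <<< 12)) &&& ((n ||| (n <<< 12)) >>> 1) &&& ((n ||| (n <<< 12)) >>> 2)) &&& 4095)
    == 0

lemma ncB_iff {n : ℕ} (hn : n < 4096) : ncB n = true ↔ ncBit n := by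
  have hhi : ∀ j, 12 ≤ j → n.testBit j = false := fun j hj =>
    Nat.testBit_eq_false_of_lt
      (lt_of_lt_of_le (show n < 2 ^ 12 from hn) (Nat.pow_le_pow_right (by norm_num) hj))
  unfold ncB
  rw [beq_iff_eq]
  constructor
  · intro h k
    have := congrArg (fun x => x.testBit (k : ℕ)) h
    simp only [Nat.testBit_and, Nat.testBit_or, Nat.testBit_shiftLeft, Nat.testBit_shiftRight,
      Nat.zero_testBit, show (4095 : ℕ) = 2 ^ 12 - 1 from rfl, Nat.testBit_two_pow_sub_one] at this
    rcases k with ⟨k, hk⟩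
    interval_cases k <;>
      simp_all [Bool.and_eq_false_iff, Bool.or_eq_true, hhi 12 le_rfl, hhi 13 (by norm_num)] <;>
      tauto
  · intro h
    apply Nat.zero_of_testBit_eq_false
    intro k
    simp only [Nat.testBit_and, Nat.testBit_or, Nat.testBit_shiftLeft, Nat.testBit_shiftRight,
      show (4095 : ℕ) = 2 ^ 12 - 1 from rfl, Nat.testBit_two_pow_sub_one]
    by_cases hk : k < 12
    · have := h ⟨k, hk⟩
      simp only [not_and] at this
      interval_cases k <;>
        simp_all [hhi 12 le_rfl, hhi 13 (by norm_num)] <;> tauto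
    · simp [hk]

/-- Fast boolean maximality test. -/
def maxB (n : ℕ) : Bool :=
  ncB n && (List.range 12).all fun k => n.testBit k || !(ncB (n ||| 2^k))

lemma maxB_iff {n : ℕ} (hn : n < 4096) : maxB n = true ↔ maxBit n := by
  have hor : ∀ k : ℕ, k < 12 → n ||| 2 ^ k < 4096 := by
    intro k hk
    have h1 : n ||| 2 ^ k < 2 ^ 12 := by
      apply Nat.or_lt_two_pow hn
      exact Nat.pow_lt_pow_right (by norm_num) hk
    exact h1
  unfold maxB maxBit
  rw [Bool.and_eq_true, ncB_iff hn, List.all_eq_true]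
  apply and_congr_right'
  constructor
  · intro h k hk
    have := h (k : ℕ) (by simp [List.mem_range, k.isLt])
    rw [Bool.or_eq_true, Bool.not_eq_true'] at this
    rcases this with h' | h'
    · exact absurd h' hk
    · rw [← ncB_iff (hor k k.isLt)]
      simp [h']
  · intro h k hk
    rw [List.mem_range] at hk
    rw [Bool.or_eq_true, Bool.not_eq_true']
    by_cases hb : n.testBit k
    · exact Or.inl hb
    · refine Or.inr ?_
      have := h ⟨k, hk⟩ (by simpa using hb)
      rw [← ncB_iff (hor k hk)] at this
      simpa using this

/-- Binary-tree counter of `maxB` over `[lo, lo + 2^n)`. -/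
def cnt : ℕ → ℕ → ℕ
  | lo, 0 => if maxB lo then 1 else 0
  | lo, n + 1 => cnt lo n + cnt (lo + 2 ^ n) n

lemma cnt_eq (n : ℕ) : ∀ lo : ℕ,
    cnt lo n = ((Finset.range (2 ^ n)).filter fun i => maxB (lo + i) = true).card := by
  induction n with
  | zero =>
    intro lo
    simp only [cnt, pow_zero, Finset.range_one, Finset.filter_singleton]
    split <;> simp_all
  | succ n ih =>
    intro lo
    have hsplit : (2 : ℕ) ^ (n + 1) = 2 ^ n + 2 ^ n := by ring
    have hdisj : Disjoint
        ((Finset.range (2 ^ n)).filter fun i => maxB (lo + i) = true)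
        (((Finset.range (2 ^ n)).map (addLeftEmbedding (2 ^ n))).filter
          fun i => maxB (lo + i) = true) := by
      rw [Finset.disjoint_left]
      intro a ha hb
      simp only [Finset.mem_filter, Finset.mem_range, Finset.mem_map,
        addLeftEmbedding_apply] at ha hb
      obtain ⟨⟨b, _, hba⟩, _⟩ := hb
      omega
    have hcomp : Finset.filter ((fun i => maxB (lo + i) = true) ∘ (addLeftEmbedding (2 ^ n)))
          (Finset.range (2 ^ n)) =
        Finset.filter (fun i => maxB (lo + 2 ^ n + i) = true) (Finset.range (2 ^ n)) := by
      apply Finset.filter_congr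
      intro i _
      simp [addLeftEmbedding_apply, ← add_assoc]
    rw [hsplit, Finset.range_add, Finset.filter_union,
      Finset.card_union_of_disjoint hdisj, Finset.filter_map, hcomp, Finset.card_map]
    show cnt lo n + cnt (lo + 2 ^ n) n = _
    rw [ih lo, ih (lo + 2 ^ n)]

set_option maxHeartbeats 1000000 in
lemma cnt_val : cnt 0 12 = 57 := by decide

theorem maximal_nonchromatic_count :
    (Finset.univ.filter (fun S : Finset (ZMod 12) => MaximalNC S)).card = 57 := by
  have h := Finset.card_equiv (s := Finset.univ.filter (fun n : Fin 4096 => maxBit (n : ℕ)))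
    (t := Finset.univ.filter (fun S : Finset (ZMod 12) => MaximalNC S))
    (Equiv.ofBijective toScale' toScale'_bij)
    (fun n => by simp [Equiv.ofBijective, toScale', maximal_toScale])
  rw [← h]
  have h2 : (Finset.univ.filter (fun n : Fin 4096 => maxBit (n : ℕ))).card
      = ((Finset.range 4096).filter fun i => maxB (0 + i) = true).card := by
    apply Finset.card_nbij (fun n : Fin 4096 => (n : ℕ))
    · intro a ha
      simp only [Finset.mem_coe, Finset.mem_filter, Finset.mem_univ, true_and] at ha
      simp only [Finset.mem_coe, Finset.mem_filter, Finset.mem_range, zero_add]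
      exact ⟨a.isLt, (maxB_iff a.isLt).2 ha⟩
    · intro a _ b _ h; exact Fin.ext h
    · intro b hb
      simp only [Finset.coe_filter, Finset.mem_range, Set.mem_setOf_eq, zero_add] at hb
      refine ⟨⟨b, hb.1⟩, ?_, rfl⟩
      simp only [Finset.mem_coe, Finset.mem_filter, Finset.mem_univ, true_and]
      exact (maxB_iff hb.1).1 hb.2
  rw [h2, show (4096 : ℕ) = 2 ^ 12 from by norm_num, ← cnt_eq]
  exact cnt_val
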